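/- arXiv:2101.08364 — 2 statements merged into one kernel-verified Lean document; each statement's English description precedes it below -/
import Mathlib

section
/- Preservation of level via the CbV translation: (1) for every λ-context c, ℓv(c) = ℓ(c^v); (2) for every λ-term t and k ∈ ℕ: t →βv u at level k iff t^v →!β at level k followed by an optional →d step at level k to u^v, and t →o u at level k iff t^v →o at level k followed by an optional →d step at level k to u^v, for any o ∈ O; (3) for every λ-term t, ℓℓv(t) = ℓℓ(t^v), where ℓℓv and ℓℓ are the least levels with respect to the sets of βv- and o-redexes, resp. !β- and o-redexes. -/
namespace BangPaper

/-- λ-terms with operators `O`, each with arity `ar o`. -/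
inductive Lam (O : Type) (ar : O → ℕ) : Type
  | var : ℕ → Lam O ar
  | lam : ℕ → Lam O ar → Lam O ar
  | app : Lam O ar → Lam O ar → Lam O ar
  | op  : (o : O) → (Fin (ar o) → Lam O ar) → Lam O ar

/-- Terms of the bang calculus `Λ!O`. -/
inductive BT (O : Type) (ar : O → ℕ) : Type
  | var : ℕ → BT O ar
  | lam : ℕ → BT O ar → BT O ar
  | app : BT O ar → BT O ar → BT O ar
  | bang : BT O ar → BT O ar
  | op  : (o : O) → (Fin (ar o) → BT O ar) → BT O ar

variable {O : Type} {ar : O → ℕ}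

/-- Values: variables and abstractions. -/
def Lam.isValue : Lam O ar → Prop
  | .var _ => True
  | .lam _ _ => True
  | _ => False

/-- Substitution `t[u/x]` on λ-terms. -/
def Lam.subst : Lam O ar → ℕ → Lam O ar → Lam O ar
  | .var y, x, u => if y = x then u else .var y
  | .lam y t, x, u => if y = x then .lam y t else .lam y (Lam.subst t x u)
  | .app t s, x, u => .app (Lam.subst t x u) (Lam.subst s x u)
  | .op o ts, x, u => .op o (fun i => Lam.subst (ts i) x u)

/-- Substitution `T[S/x]` on bang-calculus terms. -/
def BT.subst : BT O ar → ℕ → BT O ar → BT O ar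
  | .var y, x, u => if y = x then u else .var y
  | .lam y t, x, u => if y = x then .lam y t else .lam y (BT.subst t x u)
  | .app t s, x, u => .app (BT.subst t x u) (BT.subst s x u)
  | .bang t, x, u => .bang (BT.subst t x u)
  | .op o ts, x, u => .op o (fun i => BT.subst (ts i) x u)

/-- One-hole contexts for λ-terms. -/
inductive LCtx (O : Type) (ar : O → ℕ) : Type
  | hole : LCtx O ar
  | lam  : ℕ → LCtx O ar → LCtx O ar
  | appL : LCtx O ar → Lam O ar → LCtx O ar
  | appR : Lam O ar → LCtx O ar → LCtx O ar
  | op   : (o : O) → (Fin (ar o) → Lam O ar) → Fin (ar o) → LCtx O ar → LCtx O ar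

/-- One-hole contexts for bang-calculus terms. -/
inductive BCtx (O : Type) (ar : O → ℕ) : Type
  | hole : BCtx O ar
  | lam  : ℕ → BCtx O ar → BCtx O ar
  | appL : BCtx O ar → BT O ar → BCtx O ar
  | appR : BT O ar → BCtx O ar → BCtx O ar
  | bang : BCtx O ar → BCtx O ar
  | op   : (o : O) → (Fin (ar o) → BT O ar) → Fin (ar o) → BCtx O ar → BCtx O ar

/-- Plugging a λ-term in a λ-context. -/
def LCtx.plug : LCtx O ar → Lam O ar → Lam O ar
  | .hole, t => t
  | .lam x c, t => .lam x (LCtx.plug c t)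
  | .appL c s, t => .app (LCtx.plug c t) s
  | .appR s c, t => .app s (LCtx.plug c t)
  | .op o ts i c, t => .op o (Function.update ts i (LCtx.plug c t))

/-- CbN level of a λ-context. -/
def LCtx.levN : LCtx O ar → ℕ
  | .hole => 0
  | .lam _ c => LCtx.levN c
  | .appL c _ => LCtx.levN c
  | .appR _ c => LCtx.levN c + 1
  | .op _ _ _ c => LCtx.levN c + 1

/-- CbV level of a λ-context. -/
def LCtx.levV : LCtx O ar → ℕ
  | .hole => 0
  | .lam _ c => LCtx.levV c + 1
  | .appL (.lam _ c') _ => LCtx.levV c'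
  | .appL c _ => LCtx.levV c
  | .appR _ c => LCtx.levV c
  | .op _ _ _ c => LCtx.levV c + 1

/-- Plugging a bang-term in a bang-context. -/
def BCtx.plug : BCtx O ar → BT O ar → BT O ar
  | .hole, t => t
  | .lam x c, t => .lam x (BCtx.plug c t)
  | .appL c s, t => .app (BCtx.plug c t) s
  | .appR s c, t => .app s (BCtx.plug c t)
  | .bang c, t => .bang (BCtx.plug c t)
  | .op o ts i c, t => .op o (Function.update ts i (BCtx.plug c t))

/-- Bang-calculus level of a context. -/
def BCtx.lev : BCtx O ar → ℕ
  | .hole => 0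
  | .lam _ c => BCtx.lev c
  | .appL c _ => BCtx.lev c
  | .appR _ c => BCtx.lev c
  | .bang c => BCtx.lev c + 1
  | .op _ _ _ c => BCtx.lev c + 1

/-- Contextual closure of a root rule on λ-terms. -/
def Lam.Step (root : Lam O ar → Lam O ar → Prop) (t s : Lam O ar) : Prop :=
  ∃ (c : LCtx O ar) (a b : Lam O ar), root a b ∧ t = c.plug a ∧ s = c.plug b

/-- Step at level `k` (w.r.t. a level function `lev` on λ-contexts). -/
def Lam.StepAt (lev : LCtx O ar → ℕ) (root : Lam O ar → Lam O ar → Prop)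
    (k : ℕ) (t s : Lam O ar) : Prop :=
  ∃ (c : LCtx O ar) (a b : Lam O ar), root a b ∧ t = c.plug a ∧ s = c.plug b ∧ lev c = k

/-- Least level of a λ-term w.r.t. a redex set `Red` and level function `lev`. -/
noncomputable def Lam.ll (lev : LCtx O ar → ℕ) (Red : Lam O ar → Prop) (t : Lam O ar) : ℕ∞ :=
  sInf { n : ℕ∞ | ∃ (c : LCtx O ar) (r : Lam O ar), Red r ∧ t = c.plug r ∧ (lev c : ℕ∞) = n }

/-- Least-level step. -/
def Lam.LLStep (lev : LCtx O ar → ℕ) (Red : Lam O ar → Prop)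
    (root : Lam O ar → Lam O ar → Prop) (t s : Lam O ar) : Prop :=
  ∃ k : ℕ, Lam.StepAt lev root k t s ∧ (k : ℕ∞) = Lam.ll lev Red t

/-- Internal (non-least-level) step. -/
def Lam.InStep (lev : LCtx O ar → ℕ) (Red : Lam O ar → Prop)
    (root : Lam O ar → Lam O ar → Prop) (t s : Lam O ar) : Prop :=
  ∃ k : ℕ, Lam.StepAt lev root k t s ∧ Lam.ll lev Red t < (k : ℕ∞)

/-- Contextual closure of a root rule on bang-terms. -/
def BT.Step (root : BT O ar → BT O ar → Prop) (t s : BT O ar) : Prop :=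
  ∃ (c : BCtx O ar) (a b : BT O ar), root a b ∧ t = c.plug a ∧ s = c.plug b

/-- Step at level `k` in the bang calculus. -/
def BT.StepAt (root : BT O ar → BT O ar → Prop) (k : ℕ) (t s : BT O ar) : Prop :=
  ∃ (c : BCtx O ar) (a b : BT O ar), root a b ∧ t = c.plug a ∧ s = c.plug b ∧ c.lev = k

/-- Least level of a bang-term w.r.t. a redex set `Red`. -/
noncomputable def BT.ll (Red : BT O ar → Prop) (t : BT O ar) : ℕ∞ :=
  sInf { n : ℕ∞ | ∃ (c : BCtx O ar) (r : BT O ar), Red r ∧ t = c.plug r ∧ (c.lev : ℕ∞) = n }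

/-- Least-level step in the bang calculus. -/
def BT.LLStep (Red : BT O ar → Prop) (root : BT O ar → BT O ar → Prop)
    (t s : BT O ar) : Prop :=
  ∃ k : ℕ, BT.StepAt root k t s ∧ (k : ℕ∞) = BT.ll Red t

/-- Internal (non-least-level) step in the bang calculus. -/
def BT.InStep (Red : BT O ar → Prop) (root : BT O ar → BT O ar → Prop)
    (t s : BT O ar) : Prop :=
  ∃ k : ℕ, BT.StepAt root k t s ∧ BT.ll Red t < (k : ℕ∞)

/-- β-rule: `(λx.t)s ↦β t[s/x]`. -/
def betaRoot : Lam O ar → Lam O ar → Prop := fun a b =>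
  ∃ x t s, a = Lam.app (Lam.lam x t) s ∧ b = Lam.subst t x s

/-- β-redexes. -/
def betaRedex : Lam O ar → Prop := fun a => ∃ x t s, a = Lam.app (Lam.lam x t) s

/-- βv-rule: `(λx.t)V ↦βv t[V/x]` for `V` a value. -/
def betavRoot : Lam O ar → Lam O ar → Prop := fun a b =>
  ∃ x t v, Lam.isValue v ∧ a = Lam.app (Lam.lam x t) v ∧ b = Lam.subst t x v

/-- βv-redexes. -/
def betavRedex : Lam O ar → Prop := fun a => ∃ x t v, Lam.isValue v ∧ a = Lam.app (Lam.lam x t) v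

/-- !β-rule: `(λx.T)(!S) ↦!β T[S/x]`. -/
def bbetaRoot : BT O ar → BT O ar → Prop := fun a b =>
  ∃ x T S, a = BT.app (BT.lam x T) (BT.bang S) ∧ b = BT.subst T x S

/-- !β-redexes. -/
def bbetaRedex : BT O ar → Prop := fun a => ∃ x T S, a = BT.app (BT.lam x T) (BT.bang S)

/-- `der := λx.x`. -/
def der : BT O ar := BT.lam 0 (BT.var 0)

/-- d-rule: `der(!T) ↦d T`. -/
def dRoot : BT O ar → BT O ar → Prop := fun a b => a = BT.app der (BT.bang b)

/-- CbN translation of λ-terms into the bang calculus. -/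
def cbn : Lam O ar → BT O ar
  | .var x => .var x
  | .lam x t => .lam x (cbn t)
  | .app t s => .app (cbn t) (.bang (cbn s))
  | .op o ts => .op o (fun i => cbn (ts i))

/-- CbV translation of λ-terms into the bang calculus. -/
def cbv : Lam O ar → BT O ar
  | .var x => .bang (.var x)
  | .lam x t => .bang (.lam x (cbv t))
  | .app t s =>
      match cbv t with
      | .bang T => .app T (cbv s)
      | T => .app (.app der T) (cbv s)
  | .op o ts => .op o (fun i => cbv (ts i))

/-- CbN translation of λ-contexts into bang-contexts. -/
def cbnCtx : LCtx O ar → BCtx O ar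
  | .hole => .hole
  | .lam x c => .lam x (cbnCtx c)
  | .appL c t => .appL (cbnCtx c) (.bang (cbn t))
  | .appR t c => .appR (cbn t) (.bang (cbnCtx c))
  | .op o ts i c => .op o (fun j => cbn (ts j)) i (cbnCtx c)

/-- CbV translation of λ-contexts into bang-contexts. -/
def cbvCtx : LCtx O ar → BCtx O ar
  | .hole => .hole
  | .lam x c => .bang (.lam x (cbvCtx c))
  | .appL c t =>
      match cbvCtx c with
      | .bang C => .appL C (cbv t)
      | C => .appL (.appR der C) (cbv t)
  | .appR t c =>
      match cbv t with
      | .bang T => .appR T (cbvCtx c)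
      | T => .appR (.app der T) (cbvCtx c)
  | .op o ts i c => .op o (fun j => cbv (ts j)) i (cbvCtx c)

/-- `a` is `r`-normal: no `r`-step from `a`. -/
def Normal {α : Type*} (r : α → α → Prop) (a : α) : Prop := ∀ b, ¬ r a b

/-- `a` is strongly `r`-normalizing. -/
def SN {α : Type*} (r : α → α → Prop) (a : α) : Prop := Acc (fun x y => r y x) a

/-- `e` is a normalizing strategy for `r`: it has the same normal forms as `r`, and
from every `r`-normalizable term every maximal `e`-sequence ends in a normal form
(i.e. it cannot be extended infinitely). -/
def NormalizingStrategy {α : Type*} (r e : α → α → Prop) : Prop :=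
  (∀ a, Normal e a ↔ Normal r a) ∧
  ∀ t u, Relation.ReflTransGen r t u → Normal r u → SN e t

/-- Redex set of `→!β ∪ →O` for a family of operator rules. -/
def BT.RedSet (rules : O → BT O ar → BT O ar → Prop) : BT O ar → Prop :=
  fun A => bbetaRedex A ∨ ∃ o B, rules o A B

/-- Step at level `k` of the compound reduction `→!β ∪ →O`. -/
def BT.FullAt (rules : O → BT O ar → BT O ar → Prop) (k : ℕ) (T S : BT O ar) : Prop :=
  BT.StepAt bbetaRoot k T S ∨ ∃ o, BT.StepAt (rules o) k T S

/-- The compound reduction `→!β ∪ →O` of the bang calculus. -/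
def BT.Full (rules : O → BT O ar → BT O ar → Prop) (T S : BT O ar) : Prop :=
  ∃ k, BT.FullAt rules k T S

/-- Least-level step of `→!β ∪ →O`. -/
def BT.FullLL (rules : O → BT O ar → BT O ar → Prop) (T S : BT O ar) : Prop :=
  ∃ k : ℕ, BT.FullAt rules k T S ∧ (k : ℕ∞) = BT.ll (BT.RedSet rules) T

/-- Internal step of `→!β ∪ →O`. -/
def BT.FullIn (rules : O → BT O ar → BT O ar → Prop) (T S : BT O ar) : Prop :=
  ∃ k : ℕ, BT.FullAt rules k T S ∧ BT.ll (BT.RedSet rules) T < (k : ℕ∞)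

/-- Redex set of `→base ∪ →O` on λ-terms. -/
def Lam.RedSet (base : Lam O ar → Prop) (rules : O → Lam O ar → Lam O ar → Prop) :
    Lam O ar → Prop :=
  fun a => base a ∨ ∃ o b, rules o a b

/-- Step at level `k` of the compound reduction `→root ∪ →O` on λ-terms. -/
def Lam.FullAt (lev : LCtx O ar → ℕ) (root : Lam O ar → Lam O ar → Prop)
    (rules : O → Lam O ar → Lam O ar → Prop) (k : ℕ) (t s : Lam O ar) : Prop :=
  Lam.StepAt lev root k t s ∨ ∃ o, Lam.StepAt lev (rules o) k t s

/-- Compound reduction `→root ∪ →O` on λ-terms. -/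
def Lam.Full (lev : LCtx O ar → ℕ) (root : Lam O ar → Lam O ar → Prop)
    (rules : O → Lam O ar → Lam O ar → Prop) (t s : Lam O ar) : Prop :=
  ∃ k, Lam.FullAt lev root rules k t s

/-- Least-level step of the compound reduction on λ-terms. -/
def Lam.FullLL (lev : LCtx O ar → ℕ) (base : Lam O ar → Prop)
    (root : Lam O ar → Lam O ar → Prop)
    (rules : O → Lam O ar → Lam O ar → Prop) (t s : Lam O ar) : Prop :=
  ∃ k : ℕ, Lam.FullAt lev root rules k t s ∧ (k : ℕ∞) = Lam.ll lev (Lam.RedSet base rules) t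

/-- Internal step of the compound reduction on λ-terms. -/
def Lam.FullIn (lev : LCtx O ar → ℕ) (base : Lam O ar → Prop)
    (root : Lam O ar → Lam O ar → Prop)
    (rules : O → Lam O ar → Lam O ar → Prop) (t s : Lam O ar) : Prop :=
  ∃ k : ℕ, Lam.FullAt lev root rules k t s ∧ Lam.ll lev (Lam.RedSet base rules) t < (k : ℕ∞)

def Lam.sz : Lam O ar → ℕ
  | .var _ => 1
  | .lam _ t => t.sz + 1
  | .app t s => t.sz + s.sz + 1
  | .op _ ts => (Finset.univ.sum fun i => (ts i).sz) + 1

lemma cbv_app_not_bang {t : Lam O ar} (h : ∀ T, cbv t ≠ .bang T) (s : Lam O ar) :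
    cbv (.app t s) = .app (.app der (cbv t)) (cbv s) := by
  simp only [cbv]

lemma cbv_app_bang {t : Lam O ar} {T : BT O ar} (h : cbv t = .bang T) (s : Lam O ar) :
    cbv (.app t s) = .app T (cbv s) := by
  simp only [cbv]; rw [h]

/-- shape of cbv: never a var, never a lam. -/
lemma cbv_shape (t : Lam O ar) :
    (∃ W, cbv t = .bang W) ∨ (∃ T S, cbv t = .app T S) ∨ (∃ o Ts, cbv t = .op o Ts) := by
  cases t with
  | var x => exact .inl ⟨_, rfl⟩
  | lam x t => exact .inl ⟨_, rfl⟩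
  | op o ts => exact .inr (.inr ⟨o, _, rfl⟩)
  | app t s =>
    rcases cbv_shape t with ⟨W, hW⟩ | h
    · exact .inr (.inl ⟨_, _, cbv_app_bang hW s⟩)
    · refine .inr (.inl ⟨_, _, cbv_app_not_bang ?_ s⟩)
      intro T hT
      rcases h with ⟨_, _, h⟩ | ⟨_, _, h⟩ <;> (rw [hT] at h; exact absurd h (by simp))

lemma cbv_ne_var (t : Lam O ar) (y : ℕ) : cbv t ≠ .var y := by
  rcases cbv_shape t with ⟨W, h⟩ | ⟨T, S, h⟩ | ⟨o, Ts, h⟩ <;> simp [h]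

lemma cbv_ne_lam (t : Lam O ar) (x : ℕ) (T : BT O ar) : cbv t ≠ .lam x T := by
  rcases cbv_shape t with ⟨W, h⟩ | ⟨T', S, h⟩ | ⟨o, Ts, h⟩ <;> simp [h]

/-- bang images come exactly from values. -/
lemma cbv_bang_iff {t : Lam O ar} {W : BT O ar} (h : cbv t = .bang W) :
    (∃ y, t = .var y ∧ W = .var y) ∨ (∃ x t', t = .lam x t' ∧ W = .lam x (cbv t')) := by
  cases t with
  | var y => left; exact ⟨y, rfl, by simpa [cbv] using h.symm⟩
  | lam x t' => right; exact ⟨x, t', rfl, by simpa [cbv] using h.symm⟩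
  | op o ts => simp [cbv] at h
  | app t s =>
    rcases cbv_shape (Lam.app t s) with ⟨W', hW⟩ | ⟨T, S, hW⟩ | ⟨o, Ts, hW⟩
    · rcases cbv_shape t with ⟨W2, h2⟩ | h2
      · rw [cbv_app_bang h2 s] at hW; exact absurd hW (by simp)
      · rw [cbv_app_not_bang (fun T ht => by
          rcases h2 with ⟨_,_,h2⟩|⟨_,_,h2⟩ <;> (rw [ht] at h2; exact absurd h2 (by simp))) s] at hW
        exact absurd hW (by simp)
    · rw [h] at hW; exact absurd hW (by simp)
    · rw [h] at hW; exact absurd hW (by simp)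

lemma isValue_of_cbv_bang {t : Lam O ar} {W : BT O ar} (h : cbv t = .bang W) : t.isValue := by
  rcases cbv_bang_iff h with ⟨y, rfl, _⟩ | ⟨x, t', rfl, _⟩ <;> trivial

lemma cbv_bang_of_isValue {t : Lam O ar} (h : t.isValue) : ∃ W, cbv t = .bang W := by
  cases t <;> first | exact ⟨_, rfl⟩ | exact absurd h (by simp [Lam.isValue])


/-- cbvCtx of a lam. -/
lemma cbvCtx_lam (x : ℕ) (c : LCtx O ar) :
    cbvCtx (.lam x c) = .bang (.lam x (cbvCtx c)) := rfl

lemma cbvCtx_bang_iff {c : LCtx O ar} {C : BCtx O ar} (h : cbvCtx c = .bang C) :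
    ∃ x c', c = .lam x c' ∧ C = .lam x (cbvCtx c') := by
  cases c with
  | lam x c' => exact ⟨x, c', rfl, by simpa [cbvCtx] using h.symm⟩
  | hole => simp [cbvCtx] at h
  | appR t c' =>
    simp only [cbvCtx] at h
    split at h <;> simp at h
  | appL c' t =>
    simp only [cbvCtx] at h
    split at h <;> simp at h
  | op o ts i c' => simp [cbvCtx] at h

lemma cbvCtx_appL_lam (x : ℕ) (c : LCtx O ar) (t : Lam O ar) :
    cbvCtx (.appL (.lam x c) t) = .appL (.lam x (cbvCtx c)) (cbv t) := rfl

lemma cbvCtx_appL_not_lam (c : LCtx O ar) (t : Lam O ar) (h : ∀ x c', c ≠ .lam x c') :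
    cbvCtx (.appL c t) = .appL (.appR der (cbvCtx c)) (cbv t) := by
  have hb : ∀ C, cbvCtx c ≠ .bang C := by
    intro C hC
    obtain ⟨x, c', rfl, -⟩ := cbvCtx_bang_iff hC
    exact h x c' rfl
  simp only [cbvCtx]

lemma cbvCtx_appR_bang {t : Lam O ar} {T : BT O ar} (h : cbv t = .bang T) (c : LCtx O ar) :
    cbvCtx (.appR t c) = .appR T (cbvCtx c) := by
  simp only [cbvCtx]; rw [h]

lemma cbvCtx_appR_not_bang {t : Lam O ar} (h : ∀ T, cbv t ≠ .bang T) (c : LCtx O ar) :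
    cbvCtx (.appR t c) = .appR (.app der (cbv t)) (cbvCtx c) := by
  simp only [cbvCtx]

lemma levV_appL_lam (x : ℕ) (c : LCtx O ar) (t : Lam O ar) :
    LCtx.levV (.appL (.lam x c) t) = c.levV := rfl

lemma levV_appL_not_lam (c : LCtx O ar) (t : Lam O ar) (h : ∀ x c', c ≠ .lam x c') :
    LCtx.levV (.appL c t) = c.levV := by
  cases c with
  | lam x c' => exact absurd rfl (h x c')
  | _ => rfl

/-- Part (1): levels of contexts are preserved. -/
lemma lev_cbvCtx : ∀ c : LCtx O ar, LCtx.levV c = BCtx.lev (cbvCtx c)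
  | .hole => rfl
  | .lam x c => by
      simp [cbvCtx_lam, LCtx.levV, BCtx.lev, lev_cbvCtx c]
  | .appL (.lam x c') t => by
      have h := lev_cbvCtx (.lam x c')
      simp [cbvCtx_lam, LCtx.levV, BCtx.lev, cbvCtx_appL_lam] at *
      omega
  | .appL .hole t => by
      simp [cbvCtx_appL_not_lam .hole t (by intro x c' h; injection h), LCtx.levV, BCtx.lev, cbvCtx]
  | .appL (.appL c' s) t => by
      have h := lev_cbvCtx (.appL c' s)
      rw [cbvCtx_appL_not_lam (.appL c' s) t (by intro x c' h; injection h)]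
      simp only [LCtx.levV, BCtx.lev]
      exact h
  | .appL (.appR s c') t => by
      have h := lev_cbvCtx (.appR s c')
      rw [cbvCtx_appL_not_lam (.appR s c') t (by intro x c' h; injection h)]
      simp only [LCtx.levV, BCtx.lev]
      exact h
  | .appL (.op o ts i c') t => by
      have h := lev_cbvCtx (.op o ts i c')
      rw [cbvCtx_appL_not_lam (.op o ts i c') t (by intro x c' h; injection h)]
      simp only [LCtx.levV, BCtx.lev]
      exact h
  | .appR t c => by
      have h := lev_cbvCtx c
      rcases cbv_shape t with ⟨W, hW⟩ | hsh
      · rw [cbvCtx_appR_bang hW c]; simpa [LCtx.levV, BCtx.lev] using h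
      · rw [cbvCtx_appR_not_bang (fun T hT => by
          rcases hsh with ⟨_,_,h2⟩|⟨_,_,h2⟩ <;> (rw [hT] at h2; exact absurd h2 (by simp))) c]
        simpa [LCtx.levV, BCtx.lev] using h
  | .op o ts i c => by
      have h := lev_cbvCtx c
      simp [cbvCtx, LCtx.levV, BCtx.lev, h]


lemma cbv_update {n : ℕ} (ts : Fin n → Lam O ar) (i : Fin n) (s : Lam O ar) :
    (fun j => cbv (Function.update ts i s j)) = Function.update (fun j => cbv (ts j)) i (cbv s) := by
  funext j
  by_cases h : j = i <;> simp [Function.update, h]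

lemma cbv_op (o : O) (ts : Fin (ar o) → Lam O ar) :
    cbv (.op o ts) = .op o (fun j => cbv (ts j)) := rfl

lemma der_subst (x : ℕ) (W : BT O ar) : BT.subst der x W = der := by
  by_cases h : (0 : ℕ) = x <;> simp [der, BT.subst, h]

lemma subst_cbv : ∀ (t : Lam O ar) (x : ℕ) {v : Lam O ar} {W : BT O ar}, cbv v = .bang W →
    cbv (t.subst x v) = (cbv t).subst x W
  | .var y, x, v, W, hv => by
      by_cases h : y = x <;> simp [Lam.subst, BT.subst, cbv, h, hv]
  | .lam y t, x, v, W, hv => by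
      by_cases h : y = x <;> simp [Lam.subst, BT.subst, cbv, h, subst_cbv t x hv]
  | .app t s, x, v, W, hv => by
      have hs := subst_cbv s x hv
      simp only [Lam.subst]
      rcases cbv_shape t with ⟨T, hT⟩ | hsh
      · have ht := subst_cbv t x hv
        rw [hT] at ht
        rw [cbv_app_bang hT s, cbv_app_bang (T := T.subst x W) (by simpa [BT.subst] using ht) _]
        simp [BT.subst, hs]
      · have hnb : ∀ T, cbv t ≠ .bang T := fun T hT => by
          rcases hsh with ⟨_,_,h2⟩|⟨_,_,h2⟩ <;> (rw [hT] at h2; exact absurd h2 (by simp))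
        have ht := subst_cbv t x hv
        have hnb' : ∀ T, cbv (t.subst x v) ≠ .bang T := by
          intro T hT
          rw [ht] at hT
          rcases hsh with ⟨a,b,h2⟩|⟨a,b,h2⟩ <;> (rw [h2] at hT; simp [BT.subst] at hT)
        rw [cbv_app_not_bang hnb _, cbv_app_not_bang hnb' _]
        simp only [BT.subst, hs, ht]
        congr 2
        by_cases h : (0:ℕ) = x <;> simp [der, BT.subst, h]
  | .op o ts, x, v, W, hv => by
      simp only [Lam.subst, cbv_op, BT.subst]
      congr 1
      funext j
      exact subst_cbv (ts j) x hv


lemma cbv_app_ne_bang (a b : Lam O ar) (W : BT O ar) : cbv (.app a b) ≠ .bang W := by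
  intro h
  rcases cbv_bang_iff h with ⟨y, h2, -⟩ | ⟨x, t', h2, -⟩ <;> injection h2

lemma cbv_op_ne_bang (o : O) (ts : Fin (ar o) → Lam O ar) (W : BT O ar) :
    cbv (.op o ts) ≠ .bang W := by simp [cbv_op]

lemma plug_update (o : O) (Ts : Fin (ar o) → BT O ar) (i : Fin (ar o)) (C : BCtx O ar)
    (X : BT O ar) : BCtx.plug (.op o Ts i C) X = .op o (Function.update Ts i (C.plug X)) := rfl

lemma plug_nonvalue : ∀ (c : LCtx O ar) {s : Lam O ar}, (∀ W, cbv s ≠ .bang W) →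
    cbv (c.plug s) = (cbvCtx c).plug (cbv s)
  | .hole, s, hs => rfl
  | .lam x c, s, hs => by
      simp only [LCtx.plug, cbvCtx_lam, cbv, BCtx.plug, plug_nonvalue c hs]
  | .appL (.lam y c') t, s, hs => by
      simp only [LCtx.plug, cbvCtx_appL_lam, BCtx.plug]
      rw [cbv_app_bang (t := .lam y (c'.plug s)) (T := .lam y (cbv (LCtx.plug c' s))) rfl t]
      rw [plug_nonvalue c' hs]
  | .appL .hole t, s, hs => by
      rw [cbvCtx_appL_not_lam .hole t (by intro x c' h; injection h)]
      simp only [LCtx.plug, BCtx.plug]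
      exact cbv_app_not_bang hs t
  | .appL (.appL c' u) t, s, hs => by
      rw [cbvCtx_appL_not_lam (.appL c' u) t (by intro x c' h; injection h)]
      simp only [LCtx.plug, BCtx.plug]
      rw [cbv_app_not_bang (fun W => cbv_app_ne_bang _ _ W) t]
      have hrec := plug_nonvalue (.appL c' u) hs
      simp only [LCtx.plug] at hrec
      rw [hrec]
  | .appL (.appR u c') t, s, hs => by
      rw [cbvCtx_appL_not_lam (.appR u c') t (by intro x c' h; injection h)]
      simp only [LCtx.plug, BCtx.plug]
      rw [cbv_app_not_bang (fun W => cbv_app_ne_bang _ _ W) t]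
      have hrec := plug_nonvalue (.appR u c') hs
      simp only [LCtx.plug] at hrec
      rw [hrec]
  | .appL (.op o ts i c') t, s, hs => by
      rw [cbvCtx_appL_not_lam (.op o ts i c') t (by intro x c' h; injection h)]
      simp only [LCtx.plug, BCtx.plug]
      rw [cbv_app_not_bang (fun W => cbv_op_ne_bang _ _ W) t]
      have hrec := plug_nonvalue (.op o ts i c') hs
      simp only [LCtx.plug] at hrec
      rw [hrec]
  | .appR t c, s, hs => by
      rcases cbv_shape t with ⟨T, hT⟩ | hsh
      · rw [cbvCtx_appR_bang hT c]
        simp only [LCtx.plug, BCtx.plug]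
        rw [cbv_app_bang hT _, plug_nonvalue c hs]
      · have hnb : ∀ T, cbv t ≠ .bang T := fun T hT => by
          rcases hsh with ⟨_,_,h2⟩|⟨_,_,h2⟩ <;> (rw [hT] at h2; exact absurd h2 (by simp))
        rw [cbvCtx_appR_not_bang hnb c]
        simp only [LCtx.plug, BCtx.plug]
        rw [cbv_app_not_bang hnb _, plug_nonvalue c hs]
  | .op o ts i c, s, hs => by
      simp only [LCtx.plug, cbvCtx, plug_update, cbv_op, cbv_update, plug_nonvalue c hs]


lemma plug_rel : ∀ (c : LCtx O ar) (b : Lam O ar),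
    cbv (c.plug b) = (cbvCtx c).plug (cbv b) ∨
    ∃ (C₀ : BCtx O ar) (X : BT O ar),
      (cbvCtx c).plug (cbv b) = C₀.plug (.app der (.bang X)) ∧
      cbv (c.plug b) = C₀.plug X ∧ C₀.lev = c.levV
  | .hole, b => .inl rfl
  | .lam x c, b => by
      rcases plug_rel c b with h | ⟨C₀, X, h1, h2, h3⟩
      · left; simp only [LCtx.plug, cbvCtx_lam, cbv, BCtx.plug, h]
      · right
        refine ⟨.bang (.lam x C₀), X, ?_, ?_, ?_⟩
        · simp only [cbvCtx_lam, BCtx.plug] at h1 ⊢; rw [h1]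
        · simp only [LCtx.plug, cbv, BCtx.plug, h2]
        · simp only [BCtx.lev, LCtx.levV, h3]
  | .appL .hole t, b => by
      rw [cbvCtx_appL_not_lam .hole t (by intro x c' h; injection h)]
      rcases cbv_shape b with ⟨W, hW⟩ | hsh
      · right
        refine ⟨.appL .hole (cbv t), W, ?_, ?_, ?_⟩
        · simp only [BCtx.plug, hW, cbvCtx]
        · simp only [LCtx.plug, BCtx.plug, cbv_app_bang hW t]
        · rfl
      · left
        have hnb : ∀ T, cbv b ≠ .bang T := fun T hT => by
          rcases hsh with ⟨_,_,h2⟩|⟨_,_,h2⟩ <;> (rw [hT] at h2; exact absurd h2 (by simp))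
        simp only [LCtx.plug, BCtx.plug, cbv_app_not_bang hnb t, cbvCtx]
  | .appL (.lam y c') t, b => by
      have key : cbv (LCtx.plug (.appL (.lam y c') t) b)
          = .app (.lam y (cbv (c'.plug b))) (cbv t) := by
        simp only [LCtx.plug]
        exact cbv_app_bang (t := .lam y (c'.plug b)) rfl t
      rcases plug_rel c' b with h | ⟨C₀, X, h1, h2, h3⟩
      · left
        rw [key, cbvCtx_appL_lam]
        simp only [BCtx.plug, h]
      · right
        refine ⟨.appL (.lam y C₀) (cbv t), X, ?_, ?_, ?_⟩
        · rw [cbvCtx_appL_lam]; simp only [BCtx.plug] at h1 ⊢; rw [h1]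
        · rw [key]; simp only [BCtx.plug, h2]
        · simp only [BCtx.lev, levV_appL_lam, h3]
  | .appL (.appL c'' u) t, b => by
      have hnb : ∀ T, cbv (LCtx.plug (.appL c'' u) b) ≠ .bang T := fun T =>
        cbv_app_ne_bang _ _ T
      have key : cbv (LCtx.plug (.appL (.appL c'' u) t) b)
          = .app (.app der (cbv (LCtx.plug (.appL c'' u) b))) (cbv t) :=
        cbv_app_not_bang hnb t
      rw [cbvCtx_appL_not_lam (.appL c'' u) t (by intro x c' h; injection h)]
      rcases plug_rel (.appL c'' u) b with h | ⟨C₀, X, h1, h2, h3⟩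
      · left; rw [key, h]; rfl
      · right
        refine ⟨.appL (.appR der C₀) (cbv t), X, ?_, ?_, ?_⟩
        · simp only [BCtx.plug] at h1 ⊢; rw [h1]
        · rw [key, h2]; rfl
        · simpa only [BCtx.lev, levV_appL_not_lam (.appL c'' u) t
            (by intro x c' h; injection h)] using h3
  | .appL (.appR u c'') t, b => by
      have hnb : ∀ T, cbv (LCtx.plug (.appR u c'') b) ≠ .bang T := fun T =>
        cbv_app_ne_bang _ _ T
      have key : cbv (LCtx.plug (.appL (.appR u c'') t) b)
          = .app (.app der (cbv (LCtx.plug (.appR u c'') b))) (cbv t) :=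
        cbv_app_not_bang hnb t
      rw [cbvCtx_appL_not_lam (.appR u c'') t (by intro x c' h; injection h)]
      rcases plug_rel (.appR u c'') b with h | ⟨C₀, X, h1, h2, h3⟩
      · left; rw [key, h]; rfl
      · right
        refine ⟨.appL (.appR der C₀) (cbv t), X, ?_, ?_, ?_⟩
        · simp only [BCtx.plug] at h1 ⊢; rw [h1]
        · rw [key, h2]; rfl
        · simpa only [BCtx.lev, levV_appL_not_lam (.appR u c'') t
            (by intro x c' h; injection h)] using h3
  | .appL (.op o ts i c'') t, b => by
      have hnb : ∀ T, cbv (LCtx.plug (.op o ts i c'') b) ≠ .bang T := fun T =>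
        cbv_op_ne_bang _ _ T
      have key : cbv (LCtx.plug (.appL (.op o ts i c'') t) b)
          = .app (.app der (cbv (LCtx.plug (.op o ts i c'') b))) (cbv t) :=
        cbv_app_not_bang hnb t
      rw [cbvCtx_appL_not_lam (.op o ts i c'') t (by intro x c' h; injection h)]
      rcases plug_rel (.op o ts i c'') b with h | ⟨C₀, X, h1, h2, h3⟩
      · left; rw [key, h]; rfl
      · right
        refine ⟨.appL (.appR der C₀) (cbv t), X, ?_, ?_, ?_⟩
        · simp only [BCtx.plug] at h1 ⊢; rw [h1]
        · rw [key, h2]; rfl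
        · simpa only [BCtx.lev, levV_appL_not_lam (.op o ts i c'') t
            (by intro x c' h; injection h)] using h3
  | .appR t c, b => by
      rcases cbv_shape t with ⟨T, hT⟩ | hsh
      · have key : cbv (LCtx.plug (.appR t c) b) = .app T (cbv (c.plug b)) :=
          cbv_app_bang hT _
        rw [cbvCtx_appR_bang hT c]
        rcases plug_rel c b with h | ⟨C₀, X, h1, h2, h3⟩
        · left; rw [key, h]; rfl
        · right
          refine ⟨.appR T C₀, X, ?_, ?_, ?_⟩
          · simp only [BCtx.plug] at h1 ⊢; rw [h1]
          · rw [key, h2]; rfl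
          · simpa only [BCtx.lev, LCtx.levV] using h3
      · have hnb : ∀ T, cbv t ≠ .bang T := fun T hT => by
          rcases hsh with ⟨_,_,h2⟩|⟨_,_,h2⟩ <;> (rw [hT] at h2; exact absurd h2 (by simp))
        have key : cbv (LCtx.plug (.appR t c) b)
            = .app (.app der (cbv t)) (cbv (c.plug b)) := cbv_app_not_bang hnb _
        rw [cbvCtx_appR_not_bang hnb c]
        rcases plug_rel c b with h | ⟨C₀, X, h1, h2, h3⟩
        · left; rw [key, h]; rfl
        · right
          refine ⟨.appR (.app der (cbv t)) C₀, X, ?_, ?_, ?_⟩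
          · simp only [BCtx.plug] at h1 ⊢; rw [h1]
          · rw [key, h2]; rfl
          · simpa only [BCtx.lev, LCtx.levV] using h3
  | .op o ts i c, b => by
      have key : cbv (LCtx.plug (.op o ts i c) b)
          = .op o (Function.update (fun j => cbv (ts j)) i (cbv (c.plug b))) := by
        simp only [LCtx.plug, cbv_op, cbv_update]
      have hctx : cbvCtx (.op o ts i c) = .op o (fun j => cbv (ts j)) i (cbvCtx c) := rfl
      rcases plug_rel c b with h | ⟨C₀, X, h1, h2, h3⟩
      · left; rw [key, h, hctx]; rfl
      · right
        refine ⟨.op o (fun j => cbv (ts j)) i C₀, X, ?_, ?_, ?_⟩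
        · rw [hctx]; simp only [BCtx.plug] at h1 ⊢; rw [h1]
        · rw [key, h2]; rfl
        · simp only [BCtx.lev, LCtx.levV, h3]


lemma good_shape {A : BT O ar} (hg : bbetaRedex A ∨ ∃ o Ts, A = BT.op o Ts) :
    (∃ x T S, A = .app (.lam x T) (.bang S)) ∨ (∃ o Ts, A = .op o Ts) := by
  rcases hg with ⟨x,T,S,h⟩|h
  exacts [.inl ⟨x,T,S,h⟩, .inr h]

lemma inv : ∀ (t : Lam O ar) (C : BCtx O ar) (A : BT O ar), cbv t = C.plug A →
    (bbetaRedex A ∨ ∃ o Ts, A = BT.op o Ts) →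
    ∃ c a, t = c.plug a ∧ A = cbv a ∧ C.lev = c.levV ∧
      ∀ X, C.plug X = (cbvCtx c).plug X
  | t, .hole, A, h, hg => ⟨.hole, t, rfl, h.symm, rfl, fun _ => rfl⟩
  | .var x, C, A, h, hg => by
      cases C with
      | hole => exact ⟨.hole, .var x, rfl, h.symm, rfl, fun _ => rfl⟩
      | bang C' =>
        exfalso
        simp only [cbv, BCtx.plug] at h
        injection h with h
        rcases good_shape hg with ⟨x',T,S,hA⟩|⟨o,Ts,hA⟩ <;> subst hA <;>
          (cases C' <;> simp only [BCtx.plug] at h <;> injection h)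
      | _ =>
        exfalso
        simp only [cbv, BCtx.plug] at h
        injection h
  | .lam x t', C, A, h, hg => by
      cases C with
      | bang C' =>
        simp only [cbv, BCtx.plug] at h
        injection h with h
        cases C' with
        | lam x' C'' =>
          simp only [BCtx.plug] at h
          injection h with hx h
          subst hx
          obtain ⟨c', a, h1, h2, h3, h4⟩ := inv t' C'' A h hg
          refine ⟨.lam x c', a, by simp [LCtx.plug, h1], h2, ?_, ?_⟩
          · simpa [BCtx.lev, LCtx.levV] using h3
          · intro X
            simp only [BCtx.plug, cbvCtx_lam, h4 X]
        | hole =>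
          exfalso
          rcases good_shape hg with ⟨x',T,S,hA⟩|⟨o,Ts,hA⟩ <;> subst hA <;>
            simp only [BCtx.plug] at h <;> injection h
        | _ =>
          exfalso
          simp only [BCtx.plug] at h
          injection h
      | hole => exact ⟨.hole, .lam x t', rfl, h.symm, rfl, fun _ => rfl⟩
      | _ =>
        exfalso
        simp only [cbv, BCtx.plug] at h
        injection h
  | .op o ts, C, A, h, hg => by
      cases C with
      | op o₂ Ts j C' =>
        simp only [cbv_op, BCtx.plug] at h
        obtain ⟨rfl, harr⟩ : o = o₂ ∧ HEq (fun j => cbv (ts j)) (Function.update Ts j (C'.plug A)) := by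
          injection h with h1 h2
          exact ⟨h1, h2⟩
        have harr' : (fun j => cbv (ts j)) = Function.update Ts j (C'.plug A) := eq_of_heq harr
        have hj : cbv (ts j) = C'.plug A := by
          have h5 := congrFun harr' j
          simpa using h5
        obtain ⟨c', a, h1, h2, h3, h4⟩ := inv (ts j) C' A hj hg
        refine ⟨.op o ts j c', a, ?_, h2, ?_, ?_⟩
        · simp only [LCtx.plug, ← h1, Function.update_eq_self]
        · simp only [BCtx.lev, LCtx.levV, h3]
        · intro X
          simp only [BCtx.plug, cbvCtx, plug_update]
          congr 1
          rw [harr', Function.update_idem, h4 X]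
      | hole => exact ⟨.hole, .op o ts, rfl, h.symm, rfl, fun _ => rfl⟩
      | _ =>
        exfalso
        simp only [cbv_op, BCtx.plug] at h
        injection h
  | .app (.var y) s, C, A, h, hg => by
      have key : cbv (Lam.app (.var y) s) = .app (.var y) (cbv s) :=
        cbv_app_bang (t := .var y) rfl s
      cases C with
      | hole => exact ⟨.hole, _, rfl, h.symm, rfl, fun _ => rfl⟩
      | appL C' S₂ =>
        exfalso
        rw [key] at h
        simp only [BCtx.plug] at h
        injection h with hL hS
        rcases good_shape hg with ⟨x',T,S,hA⟩|⟨o,Ts,hA⟩ <;> subst hA <;>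
          (cases C' <;> (try simp only [BCtx.plug] at hL) <;> injection hL)
      | appR T₂ C' =>
        rw [key] at h
        simp only [BCtx.plug] at h
        injection h with hT hs2
        obtain ⟨c', a, h1, h2, h3, h4⟩ := inv s C' A hs2 hg
        refine ⟨.appR (.var y) c', a, by simp [LCtx.plug, h1], h2,
          by simpa [BCtx.lev, LCtx.levV] using h3, ?_⟩
        intro X
        rw [cbvCtx_appR_bang (t := .var y) rfl c']
        simp only [BCtx.plug, h4 X, ← hT]
      | _ =>
        exfalso
        rw [key] at h
        simp only [BCtx.plug] at h
        injection h
  | .app (.lam x t1') s, C, A, h, hg => by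
      have key : cbv (Lam.app (.lam x t1') s) = .app (.lam x (cbv t1')) (cbv s) :=
        cbv_app_bang (t := .lam x t1') rfl s
      cases C with
      | hole => exact ⟨.hole, _, rfl, h.symm, rfl, fun _ => rfl⟩
      | appL C' S₂ =>
        rw [key] at h
        simp only [BCtx.plug] at h
        injection h with hL hS
        cases C' with
        | lam x' C'' =>
          simp only [BCtx.plug] at hL
          injection hL with hx hB
          subst hx
          obtain ⟨c'', a, h1, h2, h3, h4⟩ := inv t1' C'' A hB hg
          refine ⟨.appL (.lam x c'') s, a, by simp [LCtx.plug, h1], h2, ?_, ?_⟩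
          · simp only [BCtx.lev, levV_appL_lam]; exact h3
          · intro X
            rw [cbvCtx_appL_lam]
            simp only [BCtx.plug, h4 X, ← hS]
        | hole =>
          exfalso
          rcases good_shape hg with ⟨x',T,S,hA⟩|⟨o,Ts,hA⟩ <;> subst hA <;> injection hL
        | _ =>
          exfalso
          simp only [BCtx.plug] at hL
          injection hL
      | appR T₂ C' =>
        rw [key] at h
        simp only [BCtx.plug] at h
        injection h with hT hs2
        obtain ⟨c', a, h1, h2, h3, h4⟩ := inv s C' A hs2 hg
        refine ⟨.appR (.lam x t1') c', a, by simp [LCtx.plug, h1], h2,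
          by simpa [BCtx.lev, LCtx.levV] using h3, ?_⟩
        intro X
        rw [cbvCtx_appR_bang (t := .lam x t1') rfl c']
        simp only [BCtx.plug, h4 X, ← hT]
      | _ =>
        exfalso
        rw [key] at h
        simp only [BCtx.plug] at h
        injection h
  | .app (.app a b) s, C, A, h, hg => by
      have hnb := cbv_app_ne_bang a b
      have key : cbv (Lam.app (.app a b) s)
          = .app (.app der (cbv (.app a b))) (cbv s) := cbv_app_not_bang hnb s
      cases C with
      | hole => exact ⟨.hole, _, rfl, h.symm, rfl, fun _ => rfl⟩
      | appL C' S₂ =>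
        rw [key] at h
        simp only [BCtx.plug] at h
        injection h with hL hS
        cases C' with
        | hole =>
          exfalso
          rcases good_shape hg with ⟨x',T,S,hA⟩|⟨o,Ts,hA⟩ <;> subst hA
          · injection hL with h1 h2
            exact hnb S h2
          · injection hL
        | appL C'' U =>
          exfalso
          simp only [BCtx.plug] at hL
          injection hL with h1 h2
          cases C'' with
          | hole =>
            rcases good_shape hg with ⟨x',T,S,hA⟩|⟨o,Ts,hA⟩ <;> subst hA <;>
              (simp only [der] at h1; injection h1)
          | lam z C''' =>
            simp only [BCtx.plug, der] at h1
            injection h1 with hz h1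
            rcases good_shape hg with ⟨x',T,S,hA⟩|⟨o,Ts,hA⟩ <;> subst hA <;>
              (cases C''' <;> (try simp only [BCtx.plug] at h1) <;> injection h1)
          | _ =>
            simp only [BCtx.plug, der] at h1
            injection h1
        | appR T₃ C'' =>
          simp only [BCtx.plug] at hL
          injection hL with hT3 hB
          obtain ⟨c₁, a', h1, h2, h3, h4⟩ := inv (.app a b) C'' A hB hg
          have hc₁ : ∀ x c', c₁ ≠ .lam x c' := by
            rintro x c' rfl
            simp only [LCtx.plug] at h1
            injection h1
          refine ⟨.appL c₁ s, a', by simp [LCtx.plug, ← h1], h2, ?_, ?_⟩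
          · simp only [BCtx.lev, levV_appL_not_lam c₁ s hc₁]; exact h3
          · intro X
            rw [cbvCtx_appL_not_lam c₁ s hc₁]
            simp only [BCtx.plug, h4 X, ← hS, ← hT3]
        | _ =>
          exfalso
          simp only [BCtx.plug] at hL
          injection hL
      | appR T₂ C' =>
        rw [key] at h
        simp only [BCtx.plug] at h
        injection h with hT hs2
        obtain ⟨c', a', h1, h2, h3, h4⟩ := inv s C' A hs2 hg
        refine ⟨.appR (.app a b) c', a', by simp [LCtx.plug, h1], h2,
          by simpa [BCtx.lev, LCtx.levV] using h3, ?_⟩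
        intro X
        rw [cbvCtx_appR_not_bang hnb c']
        simp only [BCtx.plug, h4 X, ← hT]
      | _ =>
        exfalso
        rw [key] at h
        simp only [BCtx.plug] at h
        injection h
  | .app (.op o' g) s, C, A, h, hg => by
      have hnb := cbv_op_ne_bang o' g
      have key : cbv (Lam.app (.op o' g) s)
          = .app (.app der (cbv (.op o' g))) (cbv s) := cbv_app_not_bang hnb s
      cases C with
      | hole => exact ⟨.hole, _, rfl, h.symm, rfl, fun _ => rfl⟩
      | appL C' S₂ =>
        rw [key] at h
        simp only [BCtx.plug] at h
        injection h with hL hS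
        cases C' with
        | hole =>
          exfalso
          rcases good_shape hg with ⟨x',T,S,hA⟩|⟨o,Ts,hA⟩ <;> subst hA
          · injection hL with h1 h2
            exact hnb S h2
          · injection hL
        | appL C'' U =>
          exfalso
          simp only [BCtx.plug] at hL
          injection hL with h1 h2
          cases C'' with
          | hole =>
            rcases good_shape hg with ⟨x',T,S,hA⟩|⟨o,Ts,hA⟩ <;> subst hA <;>
              (simp only [der] at h1; injection h1)
          | lam z C''' =>
            simp only [BCtx.plug, der] at h1
            injection h1 with hz h1
            rcases good_shape hg with ⟨x',T,S,hA⟩|⟨o,Ts,hA⟩ <;> subst hA <;>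
              (cases C''' <;> (try simp only [BCtx.plug] at h1) <;> injection h1)
          | _ =>
            simp only [BCtx.plug, der] at h1
            injection h1
        | appR T₃ C'' =>
          simp only [BCtx.plug] at hL
          injection hL with hT3 hB
          obtain ⟨c₁, a', h1, h2, h3, h4⟩ := inv (.op o' g) C'' A hB hg
          have hc₁ : ∀ x c', c₁ ≠ .lam x c' := by
            rintro x c' rfl
            simp only [LCtx.plug] at h1
            injection h1
          refine ⟨.appL c₁ s, a', by simp [LCtx.plug, ← h1], h2, ?_, ?_⟩
          · simp only [BCtx.lev, levV_appL_not_lam c₁ s hc₁]; exact h3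
          · intro X
            rw [cbvCtx_appL_not_lam c₁ s hc₁]
            simp only [BCtx.plug, h4 X, ← hS, ← hT3]
        | _ =>
          exfalso
          simp only [BCtx.plug] at hL
          injection hL
      | appR T₂ C' =>
        rw [key] at h
        simp only [BCtx.plug] at h
        injection h with hT hs2
        obtain ⟨c', a', h1, h2, h3, h4⟩ := inv s C' A hs2 hg
        refine ⟨.appR (.op o' g) c', a', by simp [LCtx.plug, h1], h2,
          by simpa [BCtx.lev, LCtx.levV] using h3, ?_⟩
        intro X
        rw [cbvCtx_appR_not_bang hnb c']
        simp only [BCtx.plug, h4 X, ← hT]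
      | _ =>
        exfalso
        rw [key] at h
        simp only [BCtx.plug] at h
        injection h


lemma cbv_bang_or_not (t : Lam O ar) : (∃ W, cbv t = .bang W) ∨ (∀ W, cbv t ≠ .bang W) := by
  rcases cbv_shape t with h | h
  · exact .inl h
  · right; intro W hW
    rcases h with ⟨_,_,h2⟩|⟨_,_,h2⟩ <;> (rw [hW] at h2; exact absurd h2 (by simp))

lemma cbv_app_ex (t1 s : Lam O ar) : ∃ T, cbv (.app t1 s) = .app T (cbv s) := by
  rcases cbv_bang_or_not t1 with ⟨W, hW⟩ | hnb
  · exact ⟨_, cbv_app_bang hW s⟩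
  · exact ⟨_, cbv_app_not_bang hnb s⟩

lemma no_der_bang : ∀ (w : Lam O ar) (C : BCtx O ar) (X : BT O ar),
    cbv w ≠ C.plug (.app der (.bang X)) := by
  intro w C X h
  obtain ⟨c, a, -, h2, -, -⟩ := inv w C (.app der (.bang X)) h (.inl ⟨0, .var 0, X, rfl⟩)
  cases a with
  | var y => simp [cbv] at h2
  | lam y a' => simp [cbv] at h2
  | op o g => rw [cbv_op] at h2; injection h2
  | app a1 a2 =>
    rcases cbv_bang_or_not a1 with ⟨W1, hW1⟩ | hnb1
    · rw [cbv_app_bang hW1 a2] at h2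
      injection h2 with h3 h4
      rcases cbv_bang_iff hW1 with ⟨y, -, hW⟩ | ⟨z, t'', -, hW⟩ <;> rw [hW] at h3
      · injection h3
      · injection h3 with hz hb
        exact cbv_ne_var t'' 0 hb.symm
    · rw [cbv_app_not_bang hnb1 a2] at h2
      injection h2 with h3 h4
      injection h3

lemma cbv_inj : ∀ (t u : Lam O ar), cbv t = cbv u → t = u
  | .var x, u, h => by
      cases u with
      | var y => simp [cbv] at h; rw [h]
      | lam y u' => simp [cbv] at h
      | app u1 r => exact absurd h.symm (cbv_app_ne_bang u1 r _)
      | op o g => exact absurd h.symm (cbv_op_ne_bang o g _)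
  | .lam x t', u, h => by
      cases u with
      | var y => simp [cbv] at h
      | lam y u' =>
        simp only [cbv] at h
        injection h with h
        injection h with h1 h2
        rw [h1, cbv_inj t' u' h2]
      | app u1 r => exact absurd h.symm (cbv_app_ne_bang u1 r _)
      | op o g => exact absurd h.symm (cbv_op_ne_bang o g _)
  | .app t1 s, u, h => by
      cases u with
      | var y => exact absurd h (cbv_app_ne_bang t1 s _)
      | lam y u' => exact absurd h (cbv_app_ne_bang t1 s _)
      | op o g =>
        exfalso
        obtain ⟨T, hT⟩ := cbv_app_ex t1 s
        rw [hT, cbv_op] at h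
        injection h
      | app u1 r =>
        rcases cbv_bang_or_not t1 with ⟨W1, hW1⟩ | hnb1 <;>
          rcases cbv_bang_or_not u1 with ⟨W2, hW2⟩ | hnb2
        · rw [cbv_app_bang hW1 s, cbv_app_bang hW2 r] at h
          injection h with h1 h2
          rw [cbv_inj t1 u1 (by rw [hW1, hW2, h1]), cbv_inj s r h2]
        · rw [cbv_app_bang hW1 s, cbv_app_not_bang hnb2 r] at h
          injection h with h1 h2
          exfalso
          rcases cbv_bang_iff hW1 with ⟨y, -, hW⟩ | ⟨z, t'', -, hW⟩ <;>
            (rw [hW] at h1; injection h1)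
        · rw [cbv_app_not_bang hnb1 s, cbv_app_bang hW2 r] at h
          injection h with h1 h2
          exfalso
          rcases cbv_bang_iff hW2 with ⟨y, -, hW⟩ | ⟨z, t'', -, hW⟩ <;>
            (rw [hW] at h1; injection h1)
        · rw [cbv_app_not_bang hnb1 s, cbv_app_not_bang hnb2 r] at h
          injection h with h1 h2
          injection h1 with h1a h1b
          rw [cbv_inj t1 u1 h1b, cbv_inj s r h2]
  | .op o g, u, h => by
      cases u with
      | var y => exact absurd h (cbv_op_ne_bang o g _)
      | lam y u' => exact absurd h (cbv_op_ne_bang o g _)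
      | app u1 r =>
        exfalso
        obtain ⟨T, hT⟩ := cbv_app_ex u1 r
        rw [hT, cbv_op] at h
        injection h
      | op o2 g2 =>
        rw [cbv_op, cbv_op] at h
        injection h with h1 h2
        subst h1
        exact congrArg _ (funext fun j => cbv_inj (g j) (g2 j) (congrFun (eq_of_heq h2) j))


lemma uniq : ∀ (C₁ : BCtx O ar) (X₁ : BT O ar) (C₂ : BCtx O ar) (X₂ : BT O ar),
    C₁.plug (.app der (.bang X₁)) = C₂.plug (.app der (.bang X₂)) →
    (∀ (C : BCtx O ar) X, C₁.plug X₁ ≠ C.plug (.app der (.bang X))) →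
    C₂.plug X₂ = C₁.plug X₁
  | .hole, X₁, C₂, X₂, h, hnd => by
      cases C₂ with
      | hole =>
        simp only [BCtx.plug] at h ⊢
        injection h with h1 h2
        injection h2 with h2
        rw [h2]
      | appL C₂' s₂ =>
        exfalso
        simp only [BCtx.plug] at h
        injection h with h1 h2
        cases C₂' with
        | hole => simp only [BCtx.plug, der] at h1; injection h1
        | lam z C'' =>
          simp only [BCtx.plug, der] at h1
          injection h1 with hz h1
          cases C'' <;> (try simp only [BCtx.plug] at h1) <;> injection h1
        | _ => simp only [BCtx.plug, der] at h1; injection h1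
      | appR T₂ C₂' =>
        exfalso
        simp only [BCtx.plug] at h
        injection h with h1 h2
        cases C₂' with
        | bang C'' =>
          simp only [BCtx.plug] at h2
          injection h2 with h2
          exact hnd C'' X₂ h2
        | hole => injection h2
        | _ => simp only [BCtx.plug] at h2; injection h2
      | _ => exfalso; simp only [BCtx.plug] at h; injection h
  | .lam x C₁', X₁, C₂, X₂, h, hnd => by
      cases C₂ with
      | lam x₂ C₂' =>
        simp only [BCtx.plug] at h ⊢
        injection h with hx h1
        rw [← hx, uniq C₁' X₁ C₂' X₂ h1
          (fun C X hX => hnd (.lam x C) X (by simp only [BCtx.plug]; rw [hX]))]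
      | hole => exfalso; simp only [BCtx.plug] at h; injection h
      | _ => exfalso; simp only [BCtx.plug] at h; injection h
  | .bang C₁', X₁, C₂, X₂, h, hnd => by
      cases C₂ with
      | bang C₂' =>
        simp only [BCtx.plug] at h ⊢
        injection h with h1
        rw [uniq C₁' X₁ C₂' X₂ h1
          (fun C X hX => hnd (.bang C) X (by simp only [BCtx.plug]; rw [hX]))]
      | hole => exfalso; simp only [BCtx.plug] at h; injection h
      | _ => exfalso; simp only [BCtx.plug] at h; injection h
  | .appL C₁' s₁, X₁, C₂, X₂, h, hnd => by
      cases C₂ with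
      | hole =>
        exfalso
        simp only [BCtx.plug] at h
        injection h with h1 h2
        cases C₁' with
        | hole => simp only [BCtx.plug, der] at h1; injection h1
        | lam z C'' =>
          simp only [BCtx.plug, der] at h1
          injection h1 with hz h1
          cases C'' <;> (try simp only [BCtx.plug] at h1) <;> injection h1
        | _ => simp only [BCtx.plug, der] at h1; injection h1
      | appL C₂' s₂ =>
        simp only [BCtx.plug] at h ⊢
        injection h with h1 h2
        rw [← h2, uniq C₁' X₁ C₂' X₂ h1
          (fun C X hX => hnd (.appL C s₁) X (by simp only [BCtx.plug]; rw [hX]))]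
      | appR T₂ C₂' =>
        exfalso
        simp only [BCtx.plug] at h
        injection h with h1 h2
        exact hnd (.appR (C₁'.plug X₁) C₂') X₂ (by simp only [BCtx.plug]; rw [h2])
      | _ => exfalso; simp only [BCtx.plug] at h; injection h
  | .appR T₁ C₁', X₁, C₂, X₂, h, hnd => by
      cases C₂ with
      | hole =>
        exfalso
        simp only [BCtx.plug] at h
        injection h with h1 h2
        cases C₁' with
        | hole => injection h2
        | bang C'' =>
          simp only [BCtx.plug] at h2
          injection h2 with h2
          exact hnd .hole (C''.plug X₁) (by simp only [BCtx.plug]; rw [h1])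
        | _ => simp only [BCtx.plug] at h2; injection h2
      | appL C₂' s₂ =>
        exfalso
        simp only [BCtx.plug] at h
        injection h with h1 h2
        exact hnd (.appL C₂' (C₁'.plug X₁)) X₂ (by simp only [BCtx.plug]; rw [h1])
      | appR T₂ C₂' =>
        simp only [BCtx.plug] at h ⊢
        injection h with h1 h2
        rw [← h1, uniq C₁' X₁ C₂' X₂ h2
          (fun C X hX => hnd (.appR T₁ C) X (by simp only [BCtx.plug]; rw [hX]))]
      | _ => exfalso; simp only [BCtx.plug] at h; injection h
  | .op o Ts i C₁', X₁, C₂, X₂, h, hnd => by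
      cases C₂ with
      | op o₂ Ts₂ j C₂' =>
        simp only [BCtx.plug] at h ⊢
        obtain ⟨rfl, harr⟩ : o = o₂ ∧ HEq (Function.update Ts i (C₁'.plug (.app der (.bang X₁))))
            (Function.update Ts₂ j (C₂'.plug (.app der (.bang X₂)))) := by
          injection h with h1 h2
          exact ⟨h1, h2⟩
        have harr' := eq_of_heq harr
        by_cases hij : i = j
        · subst hij
          have h1 : C₁'.plug (.app der (.bang X₁)) = C₂'.plug (.app der (.bang X₂)) := by
            have h5 := congrFun harr' i
            simpa using h5
          have hrec := uniq C₁' X₁ C₂' X₂ h1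
            (fun C X hX => hnd (.op o Ts i C) X (by simp only [BCtx.plug]; rw [hX]))
          refine congrArg _ (funext fun k => ?_)
          by_cases hk : k = i
          · subst hk; simp [hrec]
          · have h5 := congrFun harr' k
            simp [Function.update, hk] at h5 ⊢
            exact h5.symm
        · exfalso
          have hTsj : Ts j = C₂'.plug (.app der (.bang X₂)) := by
            have h5 := congrFun harr' j
            simpa [Function.update, hij, Ne.symm hij] using h5
          refine hnd (.op o (Function.update Ts i (C₁'.plug X₁)) j C₂') X₂ ?_
          simp only [BCtx.plug]
          refine congrArg _ (funext fun k => ?_)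
          by_cases hk : k = j
          · subst hk; simp [Function.update, hij, Ne.symm hij, hTsj]
          · simp [Function.update, hk]
      | hole => exfalso; simp only [BCtx.plug] at h; injection h
      | _ => exfalso; simp only [BCtx.plug] at h; injection h


lemma forward_tail {c : LCtx O ar} {b u : Lam O ar} {k : ℕ}
    (htb : u = c.plug b) (hlev : c.levV = k) :
    (cbvCtx c).plug (cbv b) = cbv u ∨
      BT.StepAt dRoot k ((cbvCtx c).plug (cbv b)) (cbv u) := by
  rcases plug_rel c b with h | ⟨C₀, X, h1, h2, h3⟩
  · left; rw [htb, h]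
  · right
    exact ⟨C₀, .app der (.bang X), X, rfl, h1, by rw [htb, h2], by rw [h3, hlev]⟩

lemma endgame {c : LCtx O ar} {b u : Lam O ar} {k : ℕ}
    (h : (cbvCtx c).plug (cbv b) = cbv u ∨
      BT.StepAt dRoot k ((cbvCtx c).plug (cbv b)) (cbv u)) :
    u = c.plug b := by
  rcases plug_rel c b with hpr | ⟨C₀, X, h1, h2, h3⟩
  · rcases h with h | ⟨C₁, A, B, hroot, hU, hu, hlev⟩
    · exact cbv_inj u (c.plug b) (by rw [← h, hpr])
    · exfalso
      refine no_der_bang (c.plug b) C₁ B ?_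
      rw [hpr, hU, hroot]
  · rcases h with h | ⟨C₁, A, B, hroot, hU, hu, hlev⟩
    · exact absurd (h.symm.trans h1) (no_der_bang u C₀ X)
    · have h1' : C₀.plug (.app der (.bang X)) = C₁.plug (.app der (.bang B)) := by
        rw [← h1, hU, hroot]
      have huq := uniq C₀ X C₁ B h1'
        (fun C Z hZ => no_der_bang (c.plug b) C Z (h2.trans hZ))
      exact cbv_inj u (c.plug b) (by rw [hu, huq, ← h2])

lemma redex_reflect {a : Lam O ar} {x : ℕ} {T S : BT O ar}
    (h : cbv a = .app (.lam x T) (.bang S)) :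
    ∃ t' v, a = .app (.lam x t') v ∧ Lam.isValue v ∧ T = cbv t' ∧ cbv v = .bang S := by
  cases a with
  | var y => simp [cbv] at h
  | lam y a' => simp [cbv] at h
  | op o g => rw [cbv_op] at h; injection h
  | app a1 a2 =>
    rcases cbv_bang_or_not a1 with ⟨W1, hW1⟩ | hnb1
    · rw [cbv_app_bang hW1 a2] at h
      injection h with hL hR
      rcases cbv_bang_iff hW1 with ⟨y, -, hW⟩ | ⟨z, t1', ha1, hW⟩ <;> rw [hW] at hL
      · injection hL
      · injection hL with hz hT
        subst hz; subst ha1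
        exact ⟨t1', a2, rfl, isValue_of_cbv_bang hR, hT.symm, hR⟩
    · rw [cbv_app_not_bang hnb1 a2] at h
      injection h with hL hR
      injection hL


/-- Preservation of level via the CbV translation: (1) for contexts,
(2) for reductions at each level `k` (`βv` at level `k` corresponds to `!β` at
level `k` followed by an optional d-step at level `k`, and similarly for each
operator rule), (3) for the least level of a term, where the least levels are
taken w.r.t. the sets of βv- and o-redexes on λ-terms, resp. !β- and o-redexes
on bang-terms. The family of operator rules is given both on λ-terms
(`lamRule`) and on bang-terms (`bangRule`, the corresponding rules), with
left-hand sides of shape `o(...)`, corresponding to each other under the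
CbV translation. -/
theorem cbv_level_preservation {O : Type} {ar : O → ℕ}
    (lamRule : O → Lam O ar → Lam O ar → Prop)
    (bangRule : O → BT O ar → BT O ar → Prop)
    (hshapeL : ∀ o a b, lamRule o a b → ∃ ts, a = Lam.op o ts)
    (hshapeB : ∀ o a b, bangRule o a b → ∃ Ts, a = BT.op o Ts)
    (hsound : ∀ o a b, lamRule o a b → bangRule o (cbv a) (cbv b))
    (hcomplete : ∀ o a S, bangRule o (cbv a) S → ∃ b, S = cbv b ∧ lamRule o a b) :
    -- (1) for contexts
    (∀ c : LCtx O ar, LCtx.levV c = BCtx.lev (cbvCtx c)) ∧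
    -- (2) for reduction
    (∀ (t u : Lam O ar) (k : ℕ),
      (Lam.StepAt LCtx.levV betavRoot k t u ↔
        ∃ U, BT.StepAt bbetaRoot k (cbv t) U ∧
          (U = cbv u ∨ BT.StepAt dRoot k U (cbv u))) ∧
      (∀ o, Lam.StepAt LCtx.levV (lamRule o) k t u ↔
        ∃ U, BT.StepAt (bangRule o) k (cbv t) U ∧
          (U = cbv u ∨ BT.StepAt dRoot k U (cbv u)))) ∧
    -- (3) for least levels
    (∀ t : Lam O ar,
      Lam.ll LCtx.levV (Lam.RedSet betavRedex lamRule) t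
        = BT.ll (BT.RedSet bangRule) (cbv t)) := by
  refine ⟨lev_cbvCtx, ?_, ?_⟩
  · intro t u k
    constructor
    · constructor
      · rintro ⟨c, a, b, ⟨x, t', v, hv, ha, hb⟩, hta, htb, hlev⟩
        obtain ⟨W, hW⟩ := cbv_bang_of_isValue hv
        have hca : cbv a = .app (.lam x (cbv t')) (.bang W) := by
          rw [ha, cbv_app_bang (t := .lam x t') rfl v, hW]
        have hcb : cbv b = (cbv t').subst x W := by rw [hb]; exact subst_cbv t' x hW
        have hanb : ∀ T, cbv a ≠ .bang T := by rw [hca]; simp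
        exact ⟨(cbvCtx c).plug (cbv b), ⟨cbvCtx c, cbv a, cbv b,
          ⟨x, cbv t', W, hca, hcb⟩, by rw [hta]; exact plug_nonvalue c hanb, rfl,
          by rw [← lev_cbvCtx c, hlev]⟩, forward_tail htb hlev⟩
      · rintro ⟨U, ⟨C, A, B, ⟨x, T, S, hA, hB⟩, hta, hUB, hlev⟩, hdisj⟩
        subst hA
        subst hB
        obtain ⟨c, a, h1, h2, h3, h4⟩ := inv t C _ hta (.inl ⟨x, T, S, rfl⟩)
        obtain ⟨t', v, ha, hv, hT, hS⟩ := redex_reflect h2.symm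
        have hlevc : c.levV = k := by rw [← h3, hlev]
        have hcb : cbv (t'.subst x v) = T.subst x S := by
          rw [subst_cbv t' x hS, hT]
        have hU : U = (cbvCtx c).plug (cbv (t'.subst x v)) := by
          rw [hUB, ← hcb, h4]
        rw [hU] at hdisj
        exact ⟨c, a, t'.subst x v, ⟨x, t', v, hv, ha, rfl⟩, h1, endgame hdisj, hlevc⟩
    · intro o
      constructor
      · rintro ⟨c, a, b, hroot, hta, htb, hlev⟩
        obtain ⟨ts, rfl⟩ := hshapeL o a b hroot
        exact ⟨(cbvCtx c).plug (cbv b), ⟨cbvCtx c, _, cbv b, hsound o _ b hroot,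
          by rw [hta]; exact plug_nonvalue c (cbv_op_ne_bang o ts), rfl,
          by rw [← lev_cbvCtx c, hlev]⟩, forward_tail htb hlev⟩
      · rintro ⟨U, ⟨C, A, B, hroot, hta, hUB, hlev⟩, hdisj⟩
        obtain ⟨Ts, hATs⟩ := hshapeB o A B hroot
        obtain ⟨c, a, h1, h2, h3, h4⟩ := inv t C A hta (.inr ⟨o, Ts, hATs⟩)
        rw [h2] at hroot
        obtain ⟨b, hBb, hlr⟩ := hcomplete o a B hroot
        have hlevc : c.levV = k := by rw [← h3, hlev]
        have hU : U = (cbvCtx c).plug (cbv b) := by rw [hUB, hBb, h4]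
        rw [hU] at hdisj
        exact ⟨c, a, b, hlr, h1, endgame hdisj, hlevc⟩
  · intro t
    unfold Lam.ll BT.ll
    congr 1
    ext n
    simp only [Set.mem_setOf_eq]
    constructor
    · rintro ⟨c, r, hred, htr, hn⟩
      have hnb : ∀ W, cbv r ≠ .bang W := by
        rcases hred with ⟨x, t', v, hv, hr⟩ | ⟨o, b, hr⟩
        · rw [hr]; exact cbv_app_ne_bang _ _
        · obtain ⟨ts, rfl⟩ := hshapeL o r b hr
          exact cbv_op_ne_bang o ts
      refine ⟨cbvCtx c, cbv r, ?_, by rw [htr]; exact plug_nonvalue c hnb,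
        by rw [← lev_cbvCtx c]; exact hn⟩
      rcases hred with ⟨x, t', v, hv, hr⟩ | ⟨o, b, hr⟩
      · obtain ⟨W, hW⟩ := cbv_bang_of_isValue hv
        subst hr
        exact .inl ⟨x, cbv t', W, by rw [cbv_app_bang (t := .lam x t') rfl v, hW]⟩
      · exact .inr ⟨o, cbv b, hsound o r b hr⟩
    · rintro ⟨C, R, hred, htr, hn⟩
      have hgood : bbetaRedex R ∨ ∃ o Ts, R = BT.op o Ts := by
        rcases hred with h | ⟨o, B, h⟩
        · exact .inl h
        · exact .inr ⟨o, (hshapeB o R B h).choose, (hshapeB o R B h).choose_spec⟩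
      obtain ⟨c, a, h1, h2, h3, h4⟩ := inv t C R htr hgood
      refine ⟨c, a, ?_, h1, by rw [← h3]; exact hn⟩
      rcases hred with ⟨x, T, S, hR⟩ | ⟨o, B, hR⟩
      · obtain ⟨t', v, ha, hv, -, -⟩ := redex_reflect (a := a) (by rw [← h2, hR])
        exact .inl ⟨x, t', v, hv, ha⟩
      · rw [h2] at hR
        obtain ⟨b, -, hlr⟩ := hcomplete o a B hR
        exact .inr ⟨o, b, hlr⟩

end BangPaper
end

section
/- Good least-level of bang calculi: in Λ!O, let → = →!β ∪ →O, where each o ∈ O has redexes of shape o(P1,…,Pk). Then → has a good least-level: it is monotone (T → S implies ℓℓ(T) ≤ ℓℓ(S)) and internally invariant (T ¬ll→ S implies ℓℓ(T) = ℓℓ(S)). -/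
namespace BangPaper

variable {O : Type} {ar : O → ℕ}

/-! ### Auxiliary: syntactic least level -/

/-- Root-redex contribution of an application `app t s`: `0` if it is a
`!β`-redex shape, `⊤` otherwise. -/
noncomputable def rp : BT O ar → BT O ar → ℕ∞
  | .lam _ _, .bang _ => 0
  | _, _ => ⊤

/-- Syntactic least level. -/
noncomputable def llsyn : BT O ar → ℕ∞
  | .var _ => ⊤
  | .lam _ t => llsyn t
  | .app t s => min (rp t s) (min (llsyn t) (llsyn s))
  | .bang t => llsyn t + 1
  | .op _ _ => 0

lemma rp_plug_left (c : BCtx O ar) (hc : c ≠ .hole) (a b s : BT O ar) :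
    rp (c.plug a) s = rp (c.plug b) s := by
  cases c <;> first
    | exact absurd rfl hc
    | (cases s <;> rfl)
    | rfl

lemma rp_plug_right (c : BCtx O ar) (hc : c ≠ .hole) (a b s : BT O ar) :
    rp s (c.plug a) = rp s (c.plug b) := by
  cases c <;> first
    | exact absurd rfl hc
    | (cases s <;> rfl)
    | rfl

lemma llsyn_plug_le (c : BCtx O ar) (r : BT O ar) (hr : llsyn r = 0) :
    llsyn (c.plug r) ≤ (c.lev : ℕ∞) := by
  induction c with
  | hole => simp [BCtx.plug, BCtx.lev, hr]
  | lam x c ih => simpa [BCtx.plug, BCtx.lev, llsyn] using ih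
  | appL c s ih =>
      show min (rp (c.plug r) s) (min (llsyn (c.plug r)) (llsyn s)) ≤ _
      exact le_trans (le_trans (min_le_right _ _) (min_le_left _ _)) ih
  | appR s c ih =>
      show min (rp s (c.plug r)) (min (llsyn s) (llsyn (c.plug r))) ≤ _
      exact le_trans (le_trans (min_le_right _ _) (min_le_right _ _)) ih
  | bang c ih =>
      show llsyn (c.plug r) + 1 ≤ ((c.lev + 1 : ℕ) : ℕ∞)
      push_cast
      exact add_le_add_left ih 1
  | op o ts i c ih =>
      show (0 : ℕ∞) ≤ _
      exact zero_le

lemma llsyn_red (rules : O → BT O ar → BT O ar → Prop)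
    (hshape : ∀ o a b, rules o a b → ∃ Ps, a = BT.op o Ps)
    (r : BT O ar) (hr : BT.RedSet rules r) : llsyn r = 0 := by
  rcases hr with ⟨x, T, S, rfl⟩ | ⟨o, B, hB⟩
  · show min (rp (.lam x T) (.bang S)) _ = 0
    simp [rp]
  · obtain ⟨Ps, rfl⟩ := hshape o r B hB
    rfl

lemma exists_decomp (rules : O → BT O ar → BT O ar → Prop)
    (htotal : ∀ (o : O) (Ps : Fin (ar o) → BT O ar), ∃ b, rules o (BT.op o Ps) b)
    (t : BT O ar) (ht : llsyn t ≠ ⊤) :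
    ∃ (c : BCtx O ar) (r : BT O ar), BT.RedSet rules r ∧ t = c.plug r ∧
      (c.lev : ℕ∞) = llsyn t := by
  induction t with
  | var x => exact absurd rfl ht
  | lam x T ih =>
      obtain ⟨c, r, hr, hpl, hlev⟩ := ih ht
      exact ⟨.lam x c, r, hr, by simp [BCtx.plug, hpl], hlev⟩
  | app T S ihT ihS =>
      have hmin : llsyn (.app T S) = min (rp T S) (min (llsyn T) (llsyn S)) := rfl
      rcases min_cases (rp T S) (min (llsyn T) (llsyn S)) with ⟨h1, _⟩ | ⟨h1, _⟩
      · -- the min is the root redex contribution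
        have hne : rp T S ≠ ⊤ := by rw [hmin, h1] at ht; exact ht
        have h0 : rp T S = 0 ∧ ∃ x T' S', T = BT.lam x T' ∧ S = BT.bang S' := by
          cases T <;> cases S <;> first
            | exact absurd rfl hne
            | exact ⟨rfl, _, _, _, rfl, rfl⟩
        obtain ⟨h0, x, T', S', rfl, rfl⟩ := h0
        refine ⟨.hole, _, Or.inl ⟨x, T', S', rfl⟩, rfl, ?_⟩
        rw [hmin, h1, h0]; rfl
      · rcases min_cases (llsyn T) (llsyn S) with ⟨h2, _⟩ | ⟨h2, _⟩
        · have hT : llsyn T ≠ ⊤ := by rw [hmin, h1, h2] at ht; exact ht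
          obtain ⟨c, r, hr, hpl, hlev⟩ := ihT hT
          exact ⟨.appL c S, r, hr, by simp [BCtx.plug, hpl],
            by rw [hmin, h1, h2]; exact hlev⟩
        · have hS : llsyn S ≠ ⊤ := by rw [hmin, h1, h2] at ht; exact ht
          obtain ⟨c, r, hr, hpl, hlev⟩ := ihS hS
          exact ⟨.appR T c, r, hr, by simp [BCtx.plug, hpl],
            by rw [hmin, h1, h2]; exact hlev⟩
  | bang T ih =>
      have hT : llsyn T ≠ ⊤ := by
        intro h
        apply ht
        show llsyn T + 1 = ⊤
        simp [h]
      obtain ⟨c, r, hr, hpl, hlev⟩ := ih hT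
      refine ⟨.bang c, r, hr, by simp [BCtx.plug, hpl], ?_⟩
      show ((c.lev + 1 : ℕ) : ℕ∞) = llsyn T + 1
      push_cast
      rw [hlev]
  | op o ts ih =>
      obtain ⟨b, hb⟩ := htotal o ts
      exact ⟨.hole, _, Or.inr ⟨o, b, hb⟩, rfl, rfl⟩

lemma ll_eq_llsyn (rules : O → BT O ar → BT O ar → Prop)
    (hshape : ∀ o a b, rules o a b → ∃ Ps, a = BT.op o Ps)
    (htotal : ∀ (o : O) (Ps : Fin (ar o) → BT O ar), ∃ b, rules o (BT.op o Ps) b)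
    (t : BT O ar) : BT.ll (BT.RedSet rules) t = llsyn t := by
  apply le_antisymm
  · by_cases h : llsyn t = ⊤
    · rw [h]; exact le_top
    · obtain ⟨c, r, hr, hpl, hlev⟩ := exists_decomp rules htotal t h
      exact sInf_le ⟨c, r, hr, hpl, hlev⟩
  · apply le_sInf
    rintro n ⟨c, r, hr, hpl, rfl⟩
    subst hpl
    exact llsyn_plug_le c r (llsyn_red rules hshape r hr)

lemma llsyn_mono (c : BCtx O ar) (a b : BT O ar) (ha : llsyn a = 0) :
    llsyn (c.plug a) ≤ llsyn (c.plug b) := by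
  induction c with
  | hole => rw [BCtx.plug, BCtx.plug, ha]; exact zero_le
  | lam x c ih => exact ih
  | appL c s ih =>
      by_cases hc : c = BCtx.hole
      · subst hc
        have h0 : llsyn (BCtx.plug (.appL BCtx.hole s) a) ≤ 0 := by
          show min _ (min (llsyn a) _) ≤ 0
          rw [ha]
          exact le_trans (min_le_right _ _) (min_le_left _ _)
        exact le_trans h0 (zero_le)
      · show min (rp (c.plug a) s) (min (llsyn (c.plug a)) (llsyn s)) ≤
          min (rp (c.plug b) s) (min (llsyn (c.plug b)) (llsyn s))
        rw [rp_plug_left c hc a b s]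
        exact min_le_min le_rfl (min_le_min ih le_rfl)
  | appR s c ih =>
      by_cases hc : c = BCtx.hole
      · subst hc
        have h0 : llsyn (BCtx.plug (.appR s BCtx.hole) a) ≤ 0 := by
          show min _ (min _ (llsyn a)) ≤ 0
          rw [ha]
          exact le_trans (min_le_right _ _) (min_le_right _ _)
        exact le_trans h0 (zero_le)
      · show min (rp s (c.plug a)) (min (llsyn s) (llsyn (c.plug a))) ≤
          min (rp s (c.plug b)) (min (llsyn s) (llsyn (c.plug b)))
        rw [rp_plug_right c hc a b s]
        exact min_le_min le_rfl (min_le_min le_rfl ih)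
  | bang c ih => exact add_le_add_left ih 1
  | op o ts i c ih => exact le_of_eq rfl

lemma llsyn_internal (c : BCtx O ar) (a b : BT O ar) (ha : llsyn a = 0)
    (h : llsyn (c.plug a) < (c.lev : ℕ∞)) :
    llsyn (c.plug b) ≤ llsyn (c.plug a) := by
  induction c with
  | hole => simp [BCtx.lev] at h
  | lam x c ih => exact ih h
  | appL c s ih =>
      by_cases hc : c = BCtx.hole
      · subst hc; simp [BCtx.lev] at h
      · have h' : min (rp (c.plug a) s) (min (llsyn (c.plug a)) (llsyn s)) <
            (c.lev : ℕ∞) := h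
        show min (rp (c.plug b) s) (min (llsyn (c.plug b)) (llsyn s)) ≤
          min (rp (c.plug a) s) (min (llsyn (c.plug a)) (llsyn s))
        rw [rp_plug_left c hc b a s]
        by_cases hA : llsyn (c.plug a) < (c.lev : ℕ∞)
        · exact min_le_min le_rfl (min_le_min (ih hA) le_rfl)
        · push_neg at hA
          have hlt : min (rp (c.plug a) s) (llsyn s) < llsyn (c.plug a) := by
            have heq : min (rp (c.plug a) s) (min (llsyn (c.plug a)) (llsyn s)) =
                min (llsyn (c.plug a)) (min (rp (c.plug a) s) (llsyn s)) := by
              ac_rfl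
            rw [heq] at h'
            by_contra hcon
            push_neg at hcon
            rw [min_eq_left hcon] at h'
            exact absurd (lt_of_lt_of_le h' hA) (lt_irrefl _)
          calc min (rp (c.plug a) s) (min (llsyn (c.plug b)) (llsyn s))
              ≤ min (rp (c.plug a) s) (llsyn s) :=
                min_le_min le_rfl (min_le_right _ _)
            _ ≤ min (rp (c.plug a) s) (min (llsyn (c.plug a)) (llsyn s)) :=
                le_min (min_le_left _ _)
                  (le_min (le_of_lt hlt) (min_le_right _ _))
  | appR s c ih =>
      by_cases hc : c = BCtx.hole
      · subst hc; simp [BCtx.lev] at h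
      · have h' : min (rp s (c.plug a)) (min (llsyn s) (llsyn (c.plug a))) <
            (c.lev : ℕ∞) := h
        show min (rp s (c.plug b)) (min (llsyn s) (llsyn (c.plug b))) ≤
          min (rp s (c.plug a)) (min (llsyn s) (llsyn (c.plug a)))
        rw [rp_plug_right c hc b a s]
        by_cases hA : llsyn (c.plug a) < (c.lev : ℕ∞)
        · exact min_le_min le_rfl (min_le_min le_rfl (ih hA))
        · push_neg at hA
          have hlt : min (rp s (c.plug a)) (llsyn s) < llsyn (c.plug a) := by
            have heq : min (rp s (c.plug a)) (min (llsyn s) (llsyn (c.plug a))) =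
                min (llsyn (c.plug a)) (min (rp s (c.plug a)) (llsyn s)) := by
              ac_rfl
            rw [heq] at h'
            by_contra hcon
            push_neg at hcon
            rw [min_eq_left hcon] at h'
            exact absurd (lt_of_lt_of_le h' hA) (lt_irrefl _)
          calc min (rp s (c.plug a)) (min (llsyn s) (llsyn (c.plug b)))
              ≤ min (rp s (c.plug a)) (llsyn s) :=
                min_le_min le_rfl (min_le_left _ _)
            _ ≤ min (rp s (c.plug a)) (min (llsyn s) (llsyn (c.plug a))) :=
                le_min (min_le_left _ _)
                  (le_min (min_le_right _ _) (le_of_lt hlt))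
  | bang c ih =>
      have h' : llsyn (c.plug a) + 1 < ((c.lev + 1 : ℕ) : ℕ∞) := h
      have h'' : llsyn (c.plug a) < (c.lev : ℕ∞) := by
        rw [Nat.cast_add, Nat.cast_one] at h'
        by_contra hcon
        push_neg at hcon
        exact absurd (lt_of_lt_of_le h' (add_le_add_left hcon 1)) (lt_irrefl _)
      exact add_le_add_left (ih h'') 1
  | op o ts i c ih => exact le_of_eq rfl

/-- Good least-level of bang calculi: for `→ = →!β ∪ →O`, where each `o ∈ O`
has redexes exactly the terms of shape `o(P1,…,Pk)`, the reduction `→` is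
monotone (steps cannot decrease the least level) and internally invariant
(internal steps preserve the least level). -/
theorem good_least_level_bang {O : Type} {ar : O → ℕ}
    (bangRule : O → BT O ar → BT O ar → Prop)
    (hshape : ∀ o a b, bangRule o a b → ∃ Ps, a = BT.op o Ps)
    (htotal : ∀ (o : O) (Ps : Fin (ar o) → BT O ar), ∃ b, bangRule o (BT.op o Ps) b) :
    -- monotonicity
    (∀ T S : BT O ar, BT.Full bangRule T S →
      BT.ll (BT.RedSet bangRule) T ≤ BT.ll (BT.RedSet bangRule) S) ∧
    -- internal invariance
    (∀ T S : BT O ar, BT.FullIn bangRule T S →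
      BT.ll (BT.RedSet bangRule) T = BT.ll (BT.RedSet bangRule) S) := by
  have key0 : ∀ a b : BT O ar, (bbetaRoot a b ∨ ∃ o, bangRule o a b) → llsyn a = 0 := by
    rintro a b (⟨x, T, S, rfl, -⟩ | ⟨o, hb⟩)
    · show min (rp (.lam x T) (.bang S)) _ = 0
      simp [rp]
    · obtain ⟨Ps, rfl⟩ := hshape o a b hb
      rfl
  have hstep : ∀ T S : BT O ar, ∀ k, BT.FullAt bangRule k T S →
      ∃ (c : BCtx O ar) (a b : BT O ar),
        llsyn a = 0 ∧ T = c.plug a ∧ S = c.plug b ∧ c.lev = k := by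
    rintro T S k (⟨c, a, b, hr, h1, h2, h3⟩ | ⟨o, c, a, b, hr, h1, h2, h3⟩)
    · exact ⟨c, a, b, key0 a b (Or.inl hr), h1, h2, h3⟩
    · exact ⟨c, a, b, key0 a b (Or.inr ⟨o, hr⟩), h1, h2, h3⟩
  constructor
  · rintro T S ⟨k, hk⟩
    obtain ⟨c, a, b, ha, rfl, rfl, -⟩ := hstep _ _ k hk
    rw [ll_eq_llsyn bangRule hshape htotal, ll_eq_llsyn bangRule hshape htotal]
    exact llsyn_mono c a b ha
  · rintro T S ⟨k, hk, hlt⟩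
    obtain ⟨c, a, b, ha, rfl, rfl, rfl⟩ := hstep _ _ _ hk
    rw [ll_eq_llsyn bangRule hshape htotal] at hlt ⊢
    rw [ll_eq_llsyn bangRule hshape htotal]
    exact le_antisymm (llsyn_mono c a b ha) (llsyn_internal c a b ha hlt)


end BangPaper
end
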